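/- Let K be a nonempty closed convex subset of Euclidean space ℝ^d. Then the function x ↦ dist(x, K)² is continuously differentiable (of class C¹) on all of ℝ^d. -/
import Mathlib

open Metric Asymptotics Filter Topology RealInnerProductSpace

local notation "E" d => EuclideanSpace ℝ (Fin d)

set_option maxHeartbeats 1000000 in
/-- The squared distance to a nonempty closed convex set `K ⊆ ℝ^d` is
continuously differentiable (of class `C¹`) on all of `ℝ^d`. -/
theorem contDiff_sq_infDist (d : ℕ)
    (K : Set (EuclideanSpace ℝ (Fin d)))
    (hKne : K.Nonempty) (hKcl : IsClosed K) (hKconv : Convex ℝ K) :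
    ContDiff ℝ 1
      (fun x : EuclideanSpace ℝ (Fin d) => (Metric.infDist x K) ^ 2) := by
  have hcomp : IsComplete K := hKcl.isComplete
  have hex := exists_norm_eq_iInf_of_complete_convex hKne hcomp hKconv
  set P : (E d) → (E d) := fun x => Classical.choose (hex x) with hP
  have hPmem : ∀ x, P x ∈ K := fun x => (Classical.choose_spec (hex x)).1
  have hPnorm : ∀ x, ‖x - P x‖ = ⨅ w : K, ‖x - w‖ :=
    fun x => (Classical.choose_spec (hex x)).2
  have hvar : ∀ x, ∀ w ∈ K, ⟪x - P x, w - P x⟫ ≤ 0 := fun x =>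
    (norm_eq_iInf_iff_real_inner_le_zero hKconv (hPmem x)).1 (hPnorm x)
  have hPdist : ∀ x, infDist x K = ‖x - P x‖ := by
    intro x
    rw [Metric.infDist_eq_iInf, hPnorm x]
    simp [dist_eq_norm]
  -- P is 1-Lipschitz
  have hPlip : ∀ x y, ‖P x - P y‖ ≤ ‖x - y‖ := by
    intro x y
    have h1 := hvar x (P y) (hPmem y)
    have h2 := hvar y (P x) (hPmem x)
    have key : ‖P x - P y‖ ^ 2 ≤ ⟪x - y, P x - P y⟫ := by
      have := add_nonpos h1 h2
      have expand : ⟪x - P x, P y - P x⟫ + ⟪y - P y, P x - P y⟫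
          = ⟪y - x, P x - P y⟫ + ⟪P x - P y, P x - P y⟫ := by
        simp only [inner_sub_left, inner_sub_right]
        ring
      rw [expand] at this
      have : ⟪P x - P y, P x - P y⟫ ≤ -⟪y - x, P x - P y⟫ := by linarith
      rw [real_inner_self_eq_norm_sq] at this
      calc ‖P x - P y‖ ^ 2 ≤ -⟪y - x, P x - P y⟫ := this
        _ = ⟪x - y, P x - P y⟫ := by rw [← inner_neg_left]; congr 1; abel
    have hc : ⟪x - y, P x - P y⟫ ≤ ‖x - y‖ * ‖P x - P y‖ :=
      real_inner_le_norm _ _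
    nlinarith [norm_nonneg (P x - P y), norm_nonneg (x - y)]
  -- the candidate derivative
  set L : (E d) → ((E d) →L[ℝ] ℝ) := fun x => (2 : ℝ) • (innerSL ℝ (x - P x)) with hL
  set f : (E d) → ℝ := fun x => ‖x - P x‖ ^ 2 with hf
  have hfeq : (fun x : E d => (infDist x K) ^ 2) = f := by
    funext x; rw [hPdist x]
  have hderiv : ∀ x, HasFDerivAt f (L x) x := by
    intro x
    rw [hasFDerivAt_iff_isLittleO_nhds_zero]
    have key : ∀ h : E d, ‖f (x + h) - f x - (L x) h‖ ≤ 5 * ‖h‖ ^ 2 := by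
      intro h
      set y := x + h with hy
      have hhy : h = y - x := by rw [hy]; abel
      -- upper bound : f y ≤ ‖y - P x‖^2
      have hub : f y - f x - (L x) h ≤ ‖h‖ ^ 2 := by
        have h1 : f y ≤ ‖y - P x‖ ^ 2 := by
          rw [hf]
          have : ‖y - P y‖ ≤ ‖y - P x‖ := by
            have := hPnorm y
            rw [this]
            exact ciInf_le ⟨0, Set.forall_mem_range.2 fun _ => norm_nonneg _⟩
              (⟨P x, hPmem x⟩ : K)
          exact pow_le_pow_left₀ (norm_nonneg _) this 2
        have hexp : ‖y - P x‖ ^ 2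
            = ‖x - P x‖ ^ 2 + 2 * ⟪x - P x, h⟫ + ‖h‖ ^ 2 := by
          have : y - P x = (x - P x) + h := by rw [hy]; abel
          rw [this, ← real_inner_self_eq_norm_sq, ← real_inner_self_eq_norm_sq,
            ← real_inner_self_eq_norm_sq]
          simp only [inner_add_left, inner_add_right]
          rw [real_inner_comm h (x - P x)]
          ring
        have hLh : (L x) h = 2 * ⟪x - P x, h⟫ := by
          rw [hL, ContinuousLinearMap.smul_apply, innerSL_apply_apply, smul_eq_mul]
        rw [hLh]
        simp only [hf] at h1 ⊢
        nlinarith [sq_nonneg ‖h‖]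
      -- lower bound
      have hlb : -(5 * ‖h‖ ^ 2) ≤ f y - f x - (L x) h := by
        have h1 : f x ≤ ‖x - P y‖ ^ 2 := by
          rw [hf]
          have : ‖x - P x‖ ≤ ‖x - P y‖ := by
            rw [hPnorm x]
            exact ciInf_le ⟨0, Set.forall_mem_range.2 fun _ => norm_nonneg _⟩
              (⟨P y, hPmem y⟩ : K)
          exact pow_le_pow_left₀ (norm_nonneg _) this 2
        have hexp : ‖x - P y‖ ^ 2
            = ‖y - P y‖ ^ 2 - 2 * ⟪y - P y, h⟫ + ‖h‖ ^ 2 := by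
          have : x - P y = (y - P y) + (-h) := by rw [hy]; abel
          rw [this, ← real_inner_self_eq_norm_sq, ← real_inner_self_eq_norm_sq]
          have hnh : ‖h‖ ^ 2 = ⟪h, h⟫ := (real_inner_self_eq_norm_sq h).symm
          simp only [inner_add_left, inner_add_right, inner_neg_left, inner_neg_right]
          rw [real_inner_comm h (y - P y), hnh]
          ring
        have hLh : (L x) h = 2 * ⟪x - P x, h⟫ := by
          rw [hL, ContinuousLinearMap.smul_apply, innerSL_apply_apply, smul_eq_mul]
        -- ⟪y - P y, h⟫ - ⟪x - P x, h⟫ = ⟪h - (P y - P x), h⟫ ≥ ‖h‖² - ‖h‖²... bound below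
        have hdiff : ⟪x - P x, h⟫ - ⟪y - P y, h⟫ ≤ ‖h‖ ^ 2 + ‖h‖ ^ 2 := by
          have : ⟪x - P x, h⟫ - ⟪y - P y, h⟫ = ⟪(x - y) + (P y - P x), h⟫ := by
            simp only [inner_add_left, inner_sub_left]; ring
          rw [this]
          have hb : ⟪(x - y) + (P y - P x), h⟫ ≤ ‖(x - y) + (P y - P x)‖ * ‖h‖ :=
            real_inner_le_norm _ _
          have hn : ‖(x - y) + (P y - P x)‖ ≤ ‖h‖ + ‖h‖ := by
            calc ‖(x - y) + (P y - P x)‖ ≤ ‖x - y‖ + ‖P y - P x‖ := norm_add_le _ _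
              _ ≤ ‖x - y‖ + ‖y - x‖ := by linarith [hPlip y x]
              _ = ‖h‖ + ‖h‖ := by rw [hhy, norm_sub_rev (y) x]
          nlinarith [norm_nonneg h, norm_nonneg ((x - y) + (P y - P x))]
        rw [hLh]
        simp only [hf] at h1 ⊢
        linarith
      rw [Real.norm_eq_abs, abs_le]
      constructor <;> [linarith; linarith [sq_nonneg ‖h‖]]
    have hO : (fun h : E d => f (x + h) - f x - (L x) h) =O[𝓝 0] fun h => ‖h‖ ^ 2 := by
      apply IsBigO.of_bound 5
      filter_upwards with h
      simpa [abs_of_nonneg (sq_nonneg ‖h‖)] using key h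
    refine hO.trans_isLittleO ?_
    have := isLittleO_pow_sub_sub (0 : E d) (m := 2) one_lt_two
    simpa using this
  rw [hfeq]
  rw [contDiff_one_iff_fderiv]
  constructor
  · exact fun x => (hderiv x).differentiableAt
  · have hfd : (fderiv ℝ f) = L := funext fun x => (hderiv x).fderiv
    rw [hfd]
    have hPcont : Continuous P := by
      rw [Metric.continuous_iff]
      intro x ε hε
      exact ⟨ε, hε, fun y hy => lt_of_le_of_lt
        (by simpa [dist_eq_norm] using hPlip y x) hy⟩
    have : Continuous fun x : E d => x - P x := continuous_id.sub hPcont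
    exact ((innerSL ℝ).continuous.comp this).const_smul (2 : ℝ)
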